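/- Let M ∈ ℝ_{≥0}^{p×q} with a factorization M = A B where A ∈ ℝ^{p×r}, B ∈ ℝ^{r×q}, and define the cones P̂ = cone(columns of B) ⊆ ℝ^r and Q̂ = {x ∈ ℝ^r : A x ≥ 0}. Then P̂ ⊆ Q̂, and M admits a factorization M = A' B' with A' ∈ ℝ_{≥0}^{p×r}, B' ∈ ℝ_{≥0}^{r×q} if and only if there exists an invertible matrix C ∈ ℝ^{r×r} with A C ≥ 0 and C^{−1} B ≥ 0 (equivalently, a simplicial cone Δ̂ = cone(columns of C) with P̂ ⊆ Δ̂ ⊆ Q̂), provided rank(M) = r so that every size-r factorization of M is of the form (AC, C^{−1}B). -/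

import Mathlib

open Matrix

lemma aux_isUnit_of_rank {r : ℕ} (N : Matrix (Fin r) (Fin r) ℝ) (h : N.rank = r) :
    IsUnit N := by
  rw [← Matrix.mulVec_surjective_iff_isUnit]
  have : LinearMap.range N.mulVecLin = ⊤ := by
    apply Submodule.eq_top_of_finrank_eq
    rw [← Matrix.rank, h]
    simp [Module.finrank_pi]
  intro v
  obtain ⟨x, hx⟩ := (LinearMap.range_eq_top.mp this) v
  exact ⟨x, hx⟩

theorem stmt16 {p q r : ℕ} (M : Matrix (Fin p) (Fin q) ℝ)
    (A : Matrix (Fin p) (Fin r) ℝ) (B : Matrix (Fin r) (Fin q) ℝ)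
    (hM : ∀ i j, 0 ≤ M i j) (hfac : M = A * B) (hrank : M.rank = r) :
    (∀ c : Fin q → ℝ, (∀ j, 0 ≤ c j) → ∀ i, 0 ≤ A.mulVec (B.mulVec c) i) ∧
    ((∃ (A' : Matrix (Fin p) (Fin r) ℝ) (B' : Matrix (Fin r) (Fin q) ℝ),
        (∀ i t, 0 ≤ A' i t) ∧ (∀ t j, 0 ≤ B' t j) ∧ M = A' * B') ↔
      ∃ C : Matrix (Fin r) (Fin r) ℝ, IsUnit C.det ∧
        (∀ i t, 0 ≤ (A * C) i t) ∧ (∀ t j, 0 ≤ (C⁻¹ * B) t j)) := by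
  constructor
  · intro c hc i
    have : A.mulVec (B.mulVec c) = M.mulVec c := by
      rw [hfac, ← Matrix.mulVec_mulVec]
    rw [this]
    simp only [Matrix.mulVec, dotProduct]
    exact Finset.sum_nonneg fun j _ => mul_nonneg (hM i j) (hc j)
  constructor
  · rintro ⟨A', B', hA', hB', hfac'⟩
    -- rank A = r
    have hrA : (Aᵀ * A).rank = r := by
      have h1 : A.rank ≤ r := by simpa using A.rank_le_card_width
      have h2 : M.rank ≤ A.rank := by
        rw [hfac]; exact Matrix.rank_mul_le_left A B
      have h3 := Matrix.rank_transpose_mul_self A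
      omega
    have hrB : (B * Bᵀ).rank = r := by
      have h1 : B.rank ≤ r := by simpa using B.rank_le_card_height
      have h2 : M.rank ≤ B.rank := by
        rw [hfac]; exact Matrix.rank_mul_le_right A B
      have h3 := Matrix.rank_self_mul_transpose B
      omega
    have hAu : IsUnit (Aᵀ * A) := aux_isUnit_of_rank _ hrA
    have hBu : IsUnit (B * Bᵀ) := aux_isUnit_of_rank _ hrB
    -- left inverse L of A, right inverse R of B
    set L : Matrix (Fin r) (Fin p) ℝ := (Aᵀ * A)⁻¹ * Aᵀ with hL
    set R : Matrix (Fin q) (Fin r) ℝ := Bᵀ * (B * Bᵀ)⁻¹ with hR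
    have hLA : L * A = 1 := by
      rw [hL, Matrix.mul_assoc, Matrix.nonsing_inv_mul _ (hAu.map Matrix.detMonoidHom)]
    have hBR : B * R = 1 := by
      rw [hR, ← Matrix.mul_assoc, Matrix.mul_nonsing_inv _ (hBu.map Matrix.detMonoidHom)]
    set C : Matrix (Fin r) (Fin r) ℝ := L * A' with hC
    set D : Matrix (Fin r) (Fin r) ℝ := B' * R with hD
    have hCB' : C * B' = B := by
      rw [hC, Matrix.mul_assoc, ← hfac', hfac, ← Matrix.mul_assoc, hLA, Matrix.one_mul]
    have hAD : A' * D = A := by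
      rw [hD, ← Matrix.mul_assoc, ← hfac', hfac, Matrix.mul_assoc, hBR, Matrix.mul_one]
    have hCD : C * D = 1 := by
      rw [hC, hD, Matrix.mul_assoc L A', ← Matrix.mul_assoc A', ← hfac', hfac,
        Matrix.mul_assoc A B R, hBR, Matrix.mul_one]
      exact hLA
    have hDC : D * C = 1 := mul_eq_one_comm.mp hCD
    have hCunit : IsUnit C.det := by
      have hdet : C.det * D.det = 1 := by
        rw [← Matrix.det_mul, hCD, Matrix.det_one]
      exact IsUnit.of_mul_eq_one _ hdet
    have hCinv : C⁻¹ = D := Matrix.inv_eq_right_inv hCD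
    refine ⟨C, hCunit, ?_, ?_⟩
    · have : A * C = A' := by
        calc A * C = A' * D * C := by rw [hAD]
        _ = A' * (D * C) := by rw [Matrix.mul_assoc]
        _ = A' := by rw [hDC, Matrix.mul_one]
      rw [this]; exact hA'
    · have : C⁻¹ * B = B' := by
        rw [hCinv, ← hCB', ← Matrix.mul_assoc, hDC, Matrix.one_mul]
      rw [this]; exact hB'
  · rintro ⟨C, hCdet, hAC, hCB⟩
    refine ⟨A * C, C⁻¹ * B, hAC, hCB, ?_⟩
    rw [Matrix.mul_assoc, ← Matrix.mul_assoc C, Matrix.mul_nonsing_inv _ hCdet,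
      Matrix.one_mul, ← hfac]
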